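/- Let R be a commutative ring, A a commutative R-algebra, L an A-module with an R-bilinear alternating bracket ⁅·,·⁆, and θ : L → Der_R(A) an R-linear map. Suppose the canonical double-dual map L → Hom_A(Hom_A(L,A), A) is injective, and suppose the following low-degree conditions hold: (i) for every a ∈ A the 1-form α ↦ θ(α)(a) is A-linear; (ii) for all a ∈ A and α, β ∈ L, θ(α)(θ(β)(a)) − θ(β)(θ(α)(a)) − θ(⁅α,β⁆)(a) = 0; (iii) for every A-linear φ : L → A, the 2-form dφ given by (dφ)(α,β) = θ(α)(φ(β)) − θ(β)(φ(α)) − φ(⁅α,β⁆) is A-linear in each argument; (iv) for every A-linear φ : L → A, the 3-form d(dφ) vanishes identically. Then (A, L, ⁅·,·⁆, θ) is a Lie–Rinehart algebra: ⁅·,·⁆ satisfies the Jacobi identity, θ(aα) = a·θ(α), θ(⁅α,β⁆) = ⁅θ(α),θ(β)⁆, and ⁅α, aβ⁆ = a⁅α,β⁆ + θ(α)(a)·β. -/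
import Mathlib


/-- The Cartan–Chevalley–Eilenberg operator, evaluated pointwise.  For an alternating
`n`-form `f`, `cce θ br f` is the `(n+1)`-form
`(df)(x₁,…,x_{n+1}) = Σᵢ (−1)^{i+1} θ(xᵢ)(f(x₁,…,x̂ᵢ,…)) + Σ_{i<j} (−1)^{i+j} f(⁅xᵢ,xⱼ⁆, …,x̂ᵢ,…,x̂ⱼ,…)`
(1-based indices).  The second sum is encoded by replacing the entry at slot `i` by the
bracket and deleting slot `j`; for alternating `f` moving the bracket entry from slot `i`
to the front costs `(-1)^i` (0-based), which accounts for the sign `(-1)^j` below. -/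
noncomputable def cce {R A L : Type*} [CommRing R] [CommRing A] [Algebra R A]
    (θ : L → Derivation R A A) (br : L → L → L)
    {n : ℕ} (f : (Fin n → L) → A) (x : Fin (n + 1) → L) : A :=
  (∑ i : Fin (n + 1), (-1 : ℤ) ^ (i : ℕ) • θ (x i) (f (x ∘ i.succAbove)))
    + ∑ i : Fin (n + 1), ∑ j : Fin (n + 1),
        if (i : ℕ) < (j : ℕ) then
          (-1 : ℤ) ^ (j : ℕ) • f (Function.update x i (br (x i) (x j)) ∘ j.succAbove)
        else 0

section helpers
variable {R A L : Type*} [CommRing R] [CommRing A] [Algebra R A]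

set_option linter.unusedSectionVars false in
lemma cce1 (θ : L → Derivation R A A) (br : L → L → L) (f : (Fin 1 → L) → A) (v : Fin 2 → L) :
    cce θ br f v = θ (v 0) (f fun _ => v 1) - θ (v 1) (f fun _ => v 0)
      - f (fun _ => br (v 0) (v 1)) := by
  have e0 : v ∘ Fin.succ = fun _ => v 1 := by ext i; fin_cases i; rfl
  have e1 : v ∘ (1 : Fin 2).succAbove = fun _ => v 0 := by ext i; fin_cases i; rfl
  have e2 : Function.update v 0 (br (v 0) (v 1)) ∘ (1 : Fin 2).succAbove
      = fun _ => br (v 0) (v 1) := by ext i; fin_cases i; rfl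
  simp [cce, Fin.sum_univ_two, e0, e1, e2]
  ring

set_option linter.unusedSectionVars false in
lemma cce2 (θ : L → Derivation R A A) (br : L → L → L) (g : (Fin 2 → L) → A) (x : Fin 3 → L) :
    cce θ br g x = θ (x 0) (g ![x 1, x 2]) - θ (x 1) (g ![x 0, x 2]) + θ (x 2) (g ![x 0, x 1])
      - g ![br (x 0) (x 1), x 2] + g ![br (x 0) (x 2), x 1] + g ![x 0, br (x 1) (x 2)] := by
  have e0 : x ∘ Fin.succ = ![x 1, x 2] := by ext i; fin_cases i <;> rfl
  have e1 : x ∘ (1 : Fin 3).succAbove = ![x 0, x 2] := by ext i; fin_cases i <;> rfl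
  have e2 : x ∘ (2 : Fin 3).succAbove = ![x 0, x 1] := by ext i; fin_cases i <;> rfl
  have e01 : Function.update x 0 (br (x 0) (x 1)) ∘ (1 : Fin 3).succAbove
      = ![br (x 0) (x 1), x 2] := by ext i; fin_cases i <;> rfl
  have e02 : Function.update x 0 (br (x 0) (x 2)) ∘ (2 : Fin 3).succAbove
      = ![br (x 0) (x 2), x 1] := by ext i; fin_cases i <;> rfl
  have e12 : Function.update x 1 (br (x 1) (x 2)) ∘ (2 : Fin 3).succAbove
      = ![x 0, br (x 1) (x 2)] := by ext i; fin_cases i <;> rfl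
  simp [cce, Fin.sum_univ_three, e0, e1, e2, e01, e02, e12]
  ring

end helpers

/-- Low-degree conditions on the CCE data imply the full Lie–Rinehart axioms, provided
the canonical map from `L` to its double `A`-dual is injective. -/
theorem lieRinehart_of_low_degree {R A L : Type*} [CommRing R] [CommRing A] [Algebra R A]
    [AddCommGroup L] [Module R L] [Module A L] [IsScalarTower R A L]
    (br : L →ₗ[R] L →ₗ[R] L) (hbr : ∀ x : L, br x x = 0)
    (θ : L →ₗ[R] Derivation R A A)
    (hinj : Function.Injective (Module.Dual.eval A L))
    -- (i) for every `a ∈ A` the 1-form `α ↦ θ(α)(a)` is `A`-linear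
    (h1 : ∀ (a c : A) (α : L), θ (c • α) a = c * θ α a)
    -- (ii) `θ` is compatible with the brackets on 0-forms
    (h2 : ∀ (a : A) (α β : L), θ α (θ β a) - θ β (θ α a) - θ (br α β) a = 0)
    -- (iii) for every `A`-linear `φ : L → A` the 2-form `dφ` is `A`-linear in each argument
    (h3 : ∀ (φ : L →ₗ[A] A) (α β : L) (c : A),
        (θ (c • α) (φ β) - θ β (φ (c • α)) - φ (br (c • α) β) =
            c * (θ α (φ β) - θ β (φ α) - φ (br α β))) ∧
          (θ α (φ (c • β)) - θ (c • β) (φ α) - φ (br α (c • β)) =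
            c * (θ α (φ β) - θ β (φ α) - φ (br α β))))
    -- (iv) for every `A`-linear `φ : L → A` the 3-form `d(dφ)` vanishes identically
    (h4 : ∀ (φ : L →ₗ[A] A) (x : Fin 3 → L),
        cce (fun z => θ z) (fun u v => br u v)
          (cce (fun z => θ z) (fun u v => br u v) (fun t : Fin 1 → L => φ (t 0))) x = 0) :
    (∀ x y z : L, br (br x y) z + br (br y z) x + br (br z x) y = 0) ∧
      (∀ (a : A) (α : L) (b : A), θ (a • α) b = a * θ α b) ∧
      (∀ α β : L, θ (br α β) = ⁅θ α, θ β⁆) ∧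
      (∀ (α β : L) (a : A), br α (a • β) = a • br α β + θ α a • β) := by

  -- double-dual injectivity criterion
  have hdd : ∀ u v : L, (∀ φ : L →ₗ[A] A, φ u = φ v) → u = v := by
    intro u v h
    apply hinj
    ext φ
    simp [h φ]
  -- antisymmetry of the bracket
  have hskew : ∀ u v : L, br u v = - br v u := by
    intro u v
    have h := hbr (u + v)
    simp only [map_add, LinearMap.add_apply, hbr] at h
    have h' : br u v + br v u = 0 := by
      rw [add_comm]; simpa using h
    exact eq_neg_of_add_eq_zero_left h'
  -- commutator formula
  have hcomm : ∀ (a : A) (u v : L), θ (br u v) a = θ u (θ v a) - θ v (θ u a) := by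
    intro a u v
    linear_combination -(h2 a u v)
  -- Leibniz on functionals
  have hLeib : ∀ (φ : L →ₗ[A] A) (α β : L) (a : A),
      φ (br α (a • β)) = a * φ (br α β) + θ α a * φ β := by
    intro φ α β a
    have h := (h3 φ α β a).2
    simp only [map_smul, smul_eq_mul, Derivation.leibniz, h1] at h
    linear_combination -h
  refine ⟨?_, fun a α b => h1 b a α, ?_, ?_⟩
  · -- Jacobi
    intro x y z
    have key : br (br x y) z - br x (br y z) - br (br x z) y = 0 := by
      apply hdd
      intro φ
      have hz := h4 φ ![x, y, z]
      rw [cce2] at hz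
      simp only [Matrix.cons_val_zero, Matrix.cons_val_one, Matrix.head_cons,
        Matrix.cons_val_two, Matrix.tail_cons] at hz
      rw [cce1, cce1, cce1, cce1, cce1, cce1] at hz
      simp only [Matrix.cons_val_zero, Matrix.cons_val_one, Matrix.head_cons,
        map_sub, hcomm, map_zero] at hz
      simp only [map_sub, map_zero]
      linear_combination hz
    have e1 : br (br y z) x = - br x (br y z) := hskew _ _
    have e2 : br (br z x) y = - br (br x z) y := by
      rw [hskew z x]; simp
    rw [e1, e2]
    linear_combination (norm := abel) key
  · -- anchor is a Lie algebra morphism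
    intro α β
    ext a
    have : ⁅θ α, θ β⁆ a = θ α (θ β a) - θ β (θ α a) := rfl
    rw [this, hcomm]
  · -- Leibniz rule
    intro α β a
    apply hdd
    intro φ
    rw [hLeib φ α β a]
    simp only [map_add, map_smul, smul_eq_mul]
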